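/- Let π₀, …, π_T be policies with occupancy measures μ_{π_t} and let α ∈ Δ_{{0,…,T}}. Define μ̄ = ∑_t α(t) μ_{π_t} with state marginal ρ̄, and the stationary policy π̄(a|s) = μ̄(s,a)/ρ̄(s) for ρ̄(s) > 0. Then the occupancy measure of π̄ equals μ̄; in particular the stationary policy π̄ induces the same state occupancy measure as the non-stationary mixture of the π_t with weights α. -/
import Mathlib


noncomputable section
open scoped BigOperators

def IsDist {X : Type*} [Fintype X] (p : X → ℝ) : Prop :=
  (∀ x, 0 ≤ p x) ∧ ∑ x, p x = 1

def IsPolicy {S A : Type*} [Fintype A] (π : S → A → ℝ) : Prop :=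
  ∀ s, IsDist (π s)

def IsKernel {S A : Type*} [Fintype S] (P : S → A → S → ℝ) : Prop :=
  ∀ s a, IsDist (P s a)

/-- Probability of (S_t = s, A_t = a) under policy `π`, kernel `P`, initial law `ρ0`. -/
def saDist {S A : Type*} [Fintype S] [Fintype A] (P : S → A → S → ℝ) (π : S → A → ℝ)
    (ρ0 : S → ℝ) : ℕ → S → A → ℝ
  | 0 => fun s a => ρ0 s * π s a
  | (t + 1) => fun s a => π s a * ∑ s' : S, ∑ a' : A, P s' a' s * saDist P π ρ0 t s' a'

/-- Discounted state-action occupancy measure of policy `π`. -/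
def occ {S A : Type*} [Fintype S] [Fintype A] (γ : ℝ) (P : S → A → S → ℝ)
    (π : S → A → ℝ) (ρ0 : S → ℝ) (s : S) (a : A) : ℝ :=
  (1 - γ) * ∑' t : ℕ, γ ^ t * saDist P π ρ0 t s a

/-- The Bellman flow constraint set `M`. -/
def InFlow {S A : Type*} [Fintype S] [Fintype A] (γ : ℝ) (P : S → A → S → ℝ)
    (ρ0 : S → ℝ) (μ : S → A → ℝ) : Prop :=
  IsDist (fun p : S × A => μ p.1 p.2) ∧
  ∀ s, ∑ a, μ s a = (1 - γ) * ρ0 s + γ * ∑ s' : S, ∑ a' : A, P s' a' s * μ s' a'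

section Aux

variable {S A : Type*} [Fintype S] [Fintype A]

lemma saDist_nonneg (P : S → A → S → ℝ) (hP : IsKernel P) (π : S → A → ℝ) (hπ : IsPolicy π)
    (ρ0 : S → ℝ) (hρ0 : IsDist ρ0) : ∀ t s a, 0 ≤ saDist P π ρ0 t s a := by
  intro t
  induction t with
  | zero => intro s a; exact mul_nonneg (hρ0.1 s) ((hπ s).1 a)
  | succ t ih =>
    intro s a
    exact mul_nonneg ((hπ s).1 a) (Finset.sum_nonneg fun s' _ =>
      Finset.sum_nonneg fun a' _ => mul_nonneg ((hP s' a').1 s) (ih s' a'))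

lemma saDist_total (P : S → A → S → ℝ) (hP : IsKernel P) (π : S → A → ℝ) (hπ : IsPolicy π)
    (ρ0 : S → ℝ) (hρ0 : IsDist ρ0) : ∀ t, ∑ s, ∑ a, saDist P π ρ0 t s a = 1 := by
  intro t
  induction t with
  | zero =>
    simp only [saDist, ← Finset.mul_sum]
    calc ∑ s, ρ0 s * ∑ a, π s a = ∑ s, ρ0 s := by
          refine Finset.sum_congr rfl fun s _ => by rw [(hπ s).2, mul_one]
      _ = 1 := hρ0.2
  | succ t ih =>
    simp only [saDist]
    have h1 : ∀ s : S, ∑ a, π s a * (∑ s' : S, ∑ a' : A, P s' a' s * saDist P π ρ0 t s' a')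
        = ∑ s' : S, ∑ a' : A, P s' a' s * saDist P π ρ0 t s' a' := by
      intro s
      rw [← Finset.sum_mul, (hπ s).2, one_mul]
    rw [Finset.sum_congr rfl fun s _ => h1 s]
    rw [Finset.sum_comm]
    calc ∑ s' : S, ∑ s : S, ∑ a' : A, P s' a' s * saDist P π ρ0 t s' a'
        = ∑ s' : S, ∑ a' : A, ∑ s : S, P s' a' s * saDist P π ρ0 t s' a' := by
          exact Finset.sum_congr rfl fun s' _ => Finset.sum_comm
      _ = ∑ s' : S, ∑ a' : A, saDist P π ρ0 t s' a' := by
          refine Finset.sum_congr rfl fun s' _ => Finset.sum_congr rfl fun a' _ => ?_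
          rw [← Finset.sum_mul, (hP s' a').2, one_mul]
      _ = 1 := ih

lemma saDist_le_one (P : S → A → S → ℝ) (hP : IsKernel P) (π : S → A → ℝ) (hπ : IsPolicy π)
    (ρ0 : S → ℝ) (hρ0 : IsDist ρ0) : ∀ t s a, saDist P π ρ0 t s a ≤ 1 := by
  intro t s a
  have h := saDist_total P hP π hπ ρ0 hρ0 t
  have h1 : saDist P π ρ0 t s a ≤ ∑ a', saDist P π ρ0 t s a' :=
    Finset.single_le_sum (fun a' _ => saDist_nonneg P hP π hπ ρ0 hρ0 t s a') (Finset.mem_univ a)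
  have h2 : ∑ a', saDist P π ρ0 t s a' ≤ ∑ s', ∑ a', saDist P π ρ0 t s' a' :=
    Finset.single_le_sum (fun s' _ => Finset.sum_nonneg fun a' _ =>
      saDist_nonneg P hP π hπ ρ0 hρ0 t s' a') (Finset.mem_univ s)
  linarith

lemma occ_summable (γ : ℝ) (hγ : γ ∈ Set.Ioo (0 : ℝ) 1) (P : S → A → S → ℝ) (hP : IsKernel P)
    (π : S → A → ℝ) (hπ : IsPolicy π) (ρ0 : S → ℝ) (hρ0 : IsDist ρ0) (s : S) (a : A) :
    Summable (fun t => γ ^ t * saDist P π ρ0 t s a) := by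
  refine Summable.of_nonneg_of_le (fun t => mul_nonneg (pow_nonneg hγ.1.le t)
    (saDist_nonneg P hP π hπ ρ0 hρ0 t s a)) (fun t => ?_)
    (summable_geometric_of_lt_one hγ.1.le hγ.2)
  exact mul_le_of_le_one_right (pow_nonneg hγ.1.le t) (saDist_le_one P hP π hπ ρ0 hρ0 t s a)

lemma occ_nonneg (γ : ℝ) (hγ : γ ∈ Set.Ioo (0 : ℝ) 1) (P : S → A → S → ℝ) (hP : IsKernel P)
    (π : S → A → ℝ) (hπ : IsPolicy π) (ρ0 : S → ℝ) (hρ0 : IsDist ρ0) (s : S) (a : A) :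
    0 ≤ occ γ P π ρ0 s a :=
  mul_nonneg (by linarith [hγ.2]) (tsum_nonneg fun t => mul_nonneg (pow_nonneg hγ.1.le t)
    (saDist_nonneg P hP π hπ ρ0 hρ0 t s a))


lemma occ_fp (γ : ℝ) (hγ : γ ∈ Set.Ioo (0 : ℝ) 1) (P : S → A → S → ℝ) (hP : IsKernel P)
    (π : S → A → ℝ) (hπ : IsPolicy π) (ρ0 : S → ℝ) (hρ0 : IsDist ρ0) (s : S) (a : A) :
    occ γ P π ρ0 s a
      = π s a * ((1 - γ) * ρ0 s + γ * ∑ s' : S, ∑ a' : A, P s' a' s * occ γ P π ρ0 s' a') := by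
  have hsum := occ_summable γ hγ P hP π hπ ρ0 hρ0
  have hterm : ∀ n : ℕ, γ ^ (n + 1) * saDist P π ρ0 (n + 1) s a
      = ∑ s' : S, ∑ a' : A, (π s a * γ * P s' a' s) * (γ ^ n * saDist P π ρ0 n s' a') := by
    intro n
    simp only [saDist, Finset.mul_sum]
    refine Finset.sum_congr rfl fun s' _ => Finset.sum_congr rfl fun a' _ => ?_
    ring
  have h2 : ∑' n : ℕ, γ ^ (n + 1) * saDist P π ρ0 (n + 1) s a
      = ∑ s' : S, ∑ a' : A, (π s a * γ * P s' a' s) * ∑' n : ℕ, γ ^ n * saDist P π ρ0 n s' a' := by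
    rw [tsum_congr hterm]
    rw [Summable.tsum_finsetSum (fun s' _ => summable_sum fun a' _ => ((hsum s' a').mul_left _))]
    refine Finset.sum_congr rfl fun s' _ => ?_
    rw [Summable.tsum_finsetSum (fun a' _ => (hsum s' a').mul_left _)]
    exact Finset.sum_congr rfl fun a' _ => tsum_mul_left
  have key : ∑ s' : S, ∑ a' : A, P s' a' s * occ γ P π ρ0 s' a'
      = (1 - γ) * ∑ s' : S, ∑ a' : A, P s' a' s * ∑' n : ℕ, γ ^ n * saDist P π ρ0 n s' a' := by
    simp only [occ, Finset.mul_sum]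
    refine Finset.sum_congr rfl fun s' _ => Finset.sum_congr rfl fun a' _ => by ring
  have h0 : occ γ P π ρ0 s a = (1 - γ) * ∑' t : ℕ, γ ^ t * saDist P π ρ0 t s a := rfl
  rw [h0, Summable.tsum_eq_zero_add (hsum s a), h2, key]
  simp only [pow_zero, one_mul]
  have h3 : saDist P π ρ0 0 s a = ρ0 s * π s a := rfl
  rw [h3]
  have pull : ∑ s' : S, ∑ a' : A, (π s a * γ * P s' a' s) * ∑' n : ℕ, γ ^ n * saDist P π ρ0 n s' a'
      = (π s a * γ) * ∑ s' : S, ∑ a' : A, P s' a' s * ∑' n : ℕ, γ ^ n * saDist P π ρ0 n s' a' := by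
    simp only [Finset.mul_sum]
    exact Finset.sum_congr rfl fun s' _ => Finset.sum_congr rfl fun a' _ => by ring
  rw [pull]
  ring

lemma occ_flow (γ : ℝ) (hγ : γ ∈ Set.Ioo (0 : ℝ) 1) (P : S → A → S → ℝ) (hP : IsKernel P)
    (π : S → A → ℝ) (hπ : IsPolicy π) (ρ0 : S → ℝ) (hρ0 : IsDist ρ0) (s : S) :
    ∑ a, occ γ P π ρ0 s a
      = (1 - γ) * ρ0 s + γ * ∑ s' : S, ∑ a' : A, P s' a' s * occ γ P π ρ0 s' a' := by
  calc ∑ a, occ γ P π ρ0 s a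
      = ∑ a, π s a * ((1 - γ) * ρ0 s + γ * ∑ s' : S, ∑ a' : A, P s' a' s * occ γ P π ρ0 s' a') :=
        Finset.sum_congr rfl fun a _ => occ_fp γ hγ P hP π hπ ρ0 hρ0 s a
    _ = (∑ a, π s a) * ((1 - γ) * ρ0 s + γ * ∑ s' : S, ∑ a' : A, P s' a' s * occ γ P π ρ0 s' a') :=
        (Finset.sum_mul _ _ _).symm
    _ = _ := by rw [(hπ s).2, one_mul]

end Aux

/-- Let `μ̄ = ∑_t α(t) μ_{π_t}` be a convex combination of occupancy measures,
with state marginal `ρ̄`, and let `π̄(a|s) = μ̄(s,a)/ρ̄(s)` whenever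
`ρ̄(s) > 0`. Then the occupancy measure of the stationary policy `π̄` equals
`μ̄`; in particular `π̄` induces the same state occupancy measure as the
non-stationary mixture of the `π_t` with weights `α`. -/
theorem stmt18 {S A : Type*} [Fintype S] [Fintype A] [Nonempty S] [Nonempty A]
    (γ : ℝ) (hγ : γ ∈ Set.Ioo (0 : ℝ) 1)
    (P : S → A → S → ℝ) (hP : IsKernel P)
    (ρ0 : S → ℝ) (hρ0 : IsDist ρ0)
    (T : ℕ) (π : Fin (T + 1) → S → A → ℝ) (hπ : ∀ t, IsPolicy (π t))
    (α : Fin (T + 1) → ℝ) (hα : IsDist α)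
    (πbar : S → A → ℝ) (hπbar : IsPolicy πbar)
    (hcond : ∀ s a, (∑ a' : A, ∑ t, α t * occ γ P (π t) ρ0 s a') ≠ 0 →
      πbar s a = (∑ t, α t * occ γ P (π t) ρ0 s a)
        / ∑ a' : A, ∑ t, α t * occ γ P (π t) ρ0 s a') :
    ∀ s a, occ γ P πbar ρ0 s a = ∑ t, α t * occ γ P (π t) ρ0 s a := by
  set μ : S → A → ℝ := fun s a => ∑ t, α t * occ γ P (π t) ρ0 s a with hμdef
  have hμ : ∀ s a, μ s a = ∑ t, α t * occ γ P (π t) ρ0 s a := fun _ _ => rfl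
  -- state-marginal flow equation for μ
  have hρflow : ∀ s, ∑ a, μ s a
      = (1 - γ) * ρ0 s + γ * ∑ s' : S, ∑ a' : A, P s' a' s * μ s' a' := by
    intro s
    have h1 : ∑ a, μ s a = ∑ t, α t * ∑ a, occ γ P (π t) ρ0 s a := by
      rw [Finset.sum_comm]
      exact Finset.sum_congr rfl fun t _ => (Finset.mul_sum _ _ _).symm
    have h3 : ∑ s' : S, ∑ a' : A, P s' a' s * μ s' a'
        = ∑ t, α t * ∑ s' : S, ∑ a' : A, P s' a' s * occ γ P (π t) ρ0 s' a' := by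
      calc ∑ s' : S, ∑ a' : A, P s' a' s * μ s' a'
          = ∑ s' : S, ∑ a' : A, ∑ t, α t * (P s' a' s * occ γ P (π t) ρ0 s' a') := by
            refine Finset.sum_congr rfl fun s' _ => Finset.sum_congr rfl fun a' _ => ?_
            rw [hμ, Finset.mul_sum]
            exact Finset.sum_congr rfl fun t _ => by ring
        _ = ∑ s' : S, ∑ t, ∑ a' : A, α t * (P s' a' s * occ γ P (π t) ρ0 s' a') :=
            Finset.sum_congr rfl fun s' _ => Finset.sum_comm
        _ = ∑ t, ∑ s' : S, ∑ a' : A, α t * (P s' a' s * occ γ P (π t) ρ0 s' a') :=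
            Finset.sum_comm
        _ = ∑ t, α t * ∑ s' : S, ∑ a' : A, P s' a' s * occ γ P (π t) ρ0 s' a' := by
            refine Finset.sum_congr rfl fun t _ => ?_
            rw [Finset.mul_sum]
            exact Finset.sum_congr rfl fun s' _ => (Finset.mul_sum _ _ _).symm
    rw [h1, h3]
    calc ∑ t, α t * ∑ a, occ γ P (π t) ρ0 s a
        = ∑ t, (α t * ((1 - γ) * ρ0 s)
            + α t * (γ * ∑ s' : S, ∑ a' : A, P s' a' s * occ γ P (π t) ρ0 s' a')) := by
          refine Finset.sum_congr rfl fun t _ => ?_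
          rw [occ_flow γ hγ P hP (π t) (hπ t) ρ0 hρ0 s]
          ring
      _ = (∑ t, α t) * ((1 - γ) * ρ0 s)
            + γ * ∑ t, α t * ∑ s' : S, ∑ a' : A, P s' a' s * occ γ P (π t) ρ0 s' a' := by
          rw [Finset.sum_add_distrib, ← Finset.sum_mul, Finset.mul_sum]
          congr 1
          exact Finset.sum_congr rfl fun t _ => by ring
      _ = _ := by rw [hα.2]; ring
  -- μ = πbar * marginal
  have hμρ : ∀ s a, μ s a = πbar s a * ∑ a', μ s a' := by
    intro s a
    by_cases h : (∑ a' : A, ∑ t, α t * occ γ P (π t) ρ0 s a') = 0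
    · have hnn : ∀ a' : A, 0 ≤ ∑ t, α t * occ γ P (π t) ρ0 s a' := fun a' =>
        Finset.sum_nonneg fun t _ => mul_nonneg (hα.1 t)
          (occ_nonneg γ hγ P hP (π t) (hπ t) ρ0 hρ0 s a')
      have h0 : ∀ a' : A, (∑ t, α t * occ γ P (π t) ρ0 s a') = 0 := fun a' =>
        (Finset.sum_eq_zero_iff_of_nonneg (fun a' _ => hnn a')).mp h a' (Finset.mem_univ a')
      have hz : ∀ a', μ s a' = 0 := fun a' => by rw [hμ, h0 a']
      rw [hz a, Finset.sum_eq_zero fun a' _ => hz a', mul_zero]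
    · have hc := hcond s a h
      have hsum : ∑ a', μ s a' = ∑ a' : A, ∑ t, α t * occ γ P (π t) ρ0 s a' :=
        Finset.sum_congr rfl fun a' _ => hμ s a'
      rw [hsum, hc, hμ, div_mul_cancel₀ _ h]
  -- fixed point equation for μ
  have hμfp : ∀ s a, μ s a
      = πbar s a * ((1 - γ) * ρ0 s + γ * ∑ s' : S, ∑ a' : A, P s' a' s * μ s' a') := by
    intro s a
    rw [hμρ s a, hρflow s]
  -- difference satisfies a contraction
  have hν : ∀ s a, occ γ P πbar ρ0 s a - μ s a
      = πbar s a * γ * ∑ s' : S, ∑ a' : A,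
          P s' a' s * (occ γ P πbar ρ0 s' a' - μ s' a') := by
    intro s a
    have hsplit : ∑ s' : S, ∑ a' : A, P s' a' s * (occ γ P πbar ρ0 s' a' - μ s' a')
        = (∑ s' : S, ∑ a' : A, P s' a' s * occ γ P πbar ρ0 s' a')
          - ∑ s' : S, ∑ a' : A, P s' a' s * μ s' a' := by
      rw [← Finset.sum_sub_distrib]
      refine Finset.sum_congr rfl fun s' _ => ?_
      rw [← Finset.sum_sub_distrib]
      exact Finset.sum_congr rfl fun a' _ => mul_sub _ _ _
    rw [hsplit, occ_fp γ hγ P hP πbar hπbar ρ0 hρ0 s a, hμfp s a]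
    ring
  -- ℓ¹ contraction argument
  set L : ℝ := ∑ s, ∑ a, |occ γ P πbar ρ0 s a - μ s a| with hLdef
  have hLnn : 0 ≤ L :=
    Finset.sum_nonneg fun s _ => Finset.sum_nonneg fun a _ => abs_nonneg _
  have hcontr : L ≤ γ * L := by
    have step1 : ∀ s a, |occ γ P πbar ρ0 s a - μ s a|
        ≤ πbar s a * γ * ∑ s' : S, ∑ a' : A,
            P s' a' s * |occ γ P πbar ρ0 s' a' - μ s' a'| := by
      intro s a
      rw [hν s a, abs_mul, abs_of_nonneg (mul_nonneg ((hπbar s).1 a) hγ.1.le)]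
      refine mul_le_mul_of_nonneg_left ?_ (mul_nonneg ((hπbar s).1 a) hγ.1.le)
      calc |∑ s' : S, ∑ a' : A, P s' a' s * (occ γ P πbar ρ0 s' a' - μ s' a')|
          ≤ ∑ s' : S, |∑ a' : A, P s' a' s * (occ γ P πbar ρ0 s' a' - μ s' a')| :=
            Finset.abs_sum_le_sum_abs _ _
        _ ≤ ∑ s' : S, ∑ a' : A, |P s' a' s * (occ γ P πbar ρ0 s' a' - μ s' a')| :=
            Finset.sum_le_sum fun s' _ => Finset.abs_sum_le_sum_abs _ _
        _ = ∑ s' : S, ∑ a' : A, P s' a' s * |occ γ P πbar ρ0 s' a' - μ s' a'| := by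
            refine Finset.sum_congr rfl fun s' _ => Finset.sum_congr rfl fun a' _ => ?_
            rw [abs_mul, abs_of_nonneg ((hP s' a').1 s)]
    calc L ≤ ∑ s, ∑ a, πbar s a * γ * ∑ s' : S, ∑ a' : A,
              P s' a' s * |occ γ P πbar ρ0 s' a' - μ s' a'| :=
          Finset.sum_le_sum fun s _ => Finset.sum_le_sum fun a _ => step1 s a
      _ = ∑ s, γ * ∑ s' : S, ∑ a' : A,
              P s' a' s * |occ γ P πbar ρ0 s' a' - μ s' a'| := by
          refine Finset.sum_congr rfl fun s _ => ?_
          rw [show ∀ x : ℝ, ∑ a, πbar s a * γ * x = (∑ a, πbar s a) * (γ * x) from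
            fun x => by rw [Finset.sum_mul]; exact Finset.sum_congr rfl fun a _ => by ring]
          rw [(hπbar s).2, one_mul]
      _ = γ * ∑ s, ∑ s' : S, ∑ a' : A,
              P s' a' s * |occ γ P πbar ρ0 s' a' - μ s' a'| := (Finset.mul_sum _ _ _).symm
      _ = γ * L := by
          congr 1
          rw [Finset.sum_comm]
          refine Finset.sum_congr rfl fun s' _ => ?_
          rw [Finset.sum_comm]
          refine Finset.sum_congr rfl fun a' _ => ?_
          rw [← Finset.sum_mul, (hP s' a').2, one_mul]
  have hL0 : L = 0 := by nlinarith [hγ.2]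
  intro s a
  have h1 : ∑ a, |occ γ P πbar ρ0 s a - μ s a| = 0 :=
    (Finset.sum_eq_zero_iff_of_nonneg (fun s _ => Finset.sum_nonneg fun a _ => abs_nonneg _)).mp
      hL0 s (Finset.mem_univ s)
  have h2 : |occ γ P πbar ρ0 s a - μ s a| = 0 :=
    (Finset.sum_eq_zero_iff_of_nonneg (fun a _ => abs_nonneg _)).mp h1 a (Finset.mem_univ a)
  have := abs_eq_zero.mp h2
  have := sub_eq_zero.mp this
  rw [← hμ s a]
  exact this
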